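/- arXiv:2104.13707 — 3 statements merged into one kernel-verified Lean document; each statement's English description precedes it below -/
import Mathlib

section
/- For positive semidefinite Hermitian matrices A and B of the same size, the maximum of tr(C) + tr(C*) over all complex matrices C satisfying that the block matrix [[A, C],[C*, B]] is positive semidefinite equals 2·tr((B^{1/2} A B^{1/2})^{1/2}). -/
open Matrix
open scoped ComplexOrder

/-- The positive semidefinite square root of a positive semidefinite matrix
(the definition removed from Mathlib, restored with its old value). -/
noncomputable def Matrix.PosSemidef.sqrt {n : Type*} [Fintype n] [DecidableEq n] {𝕜 : Type*}
    [RCLike 𝕜] {A : Matrix n n 𝕜} (hA : A.PosSemidef) : Matrix n n 𝕜 :=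
  hA.1.eigenvectorUnitary.1 * diagonal ((↑) ∘ (√·) ∘ hA.1.eigenvalues) *
  (star hA.1.eigenvectorUnitary : Matrix n n 𝕜)

namespace OTPaux
variable {n : ℕ}


lemma umul {u : Matrix (Fin n) (Fin n) ℂ} (hu : star u * u = 1) (f g : Fin n → ℂ) :
    (u * diagonal f * star u) * (u * diagonal g * star u) = u * diagonal (fun i => f i * g i) * star u := by
  have : (u * diagonal f * star u) * (u * diagonal g * star u)
      = u * (diagonal f * (star u * u) * diagonal g) * star u := by
    simp only [Matrix.mul_assoc]
  rw [this, hu, Matrix.mul_one, diagonal_mul_diagonal]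

lemma uconj {u : Matrix (Fin n) (Fin n) ℂ} (f : Fin n → ℂ) :
    (u * diagonal f * star u)ᴴ = u * diagonal (fun i => star (f i)) * star u := by
  simp only [conjTranspose_mul, diagonal_conjTranspose, star_star]
  rw [star_eq_conjTranspose u]
  simp only [Matrix.mul_assoc]
  congr 1
  ext i j
  simp [Pi.star_def]

lemma dcongr {f g : Fin n → ℂ} (h : ∀ i, f i = g i) : diagonal f = diagonal g := by
  rw [funext h]

noncomputable def pinv {X : Matrix (Fin n) (Fin n) ℂ} (hX : X.IsHermitian) : Matrix (Fin n) (Fin n) ℂ :=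
  (hX.eigenvectorUnitary : Matrix (Fin n) (Fin n) ℂ) *
    diagonal (fun i => ((hX.eigenvalues i : ℂ))⁻¹) *
    (star (hX.eigenvectorUnitary : Matrix (Fin n) (Fin n) ℂ))

section pinvprops
variable {X : Matrix (Fin n) (Fin n) ℂ} (hX : X.IsHermitian)

lemma pack : ∃ (u : Matrix (Fin n) (Fin n) ℂ) (d : Fin n → ℝ), star u * u = 1 ∧
    X = u * diagonal (fun i => (d i : ℂ)) * star u ∧
    pinv hX = u * diagonal (fun i => ((d i : ℂ))⁻¹) * star u ∧ d = hX.eigenvalues := by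
  refine ⟨_, hX.eigenvalues, (Matrix.mem_unitaryGroup_iff').mp hX.eigenvectorUnitary.2,
    ?_, ?_, rfl⟩
  · have := hX.spectral_theorem
    simp only [Unitary.conjStarAlgAut_apply] at this; exact this
  · rfl

lemma pinv_comm : X * pinv hX = pinv hX * X := by
  obtain ⟨u, d, hu, h1, h2, h3⟩ := pack hX
  rw [h2, h1, umul hu, umul hu]
  congr 2
  exact dcongr fun i => by ring

lemma pinv_hermitian : (pinv hX)ᴴ = pinv hX := by
  obtain ⟨u, d, hu, h1, h2, h3⟩ := pack hX
  rw [h2, uconj]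
  congr 2
  exact dcongr fun i => by rw [star_inv₀, RCLike.star_def, Complex.conj_ofReal]

lemma mul_pinv_mul : X * pinv hX * X = X := by
  obtain ⟨u, d, hu, h1, h2, h3⟩ := pack hX
  rw [h2, h1, umul hu, umul hu]
  congr 2
  refine dcongr fun i => ?_
  rcases eq_or_ne ((d i : ℂ)) 0 with h | h
  · simp [h]
  · field_simp

lemma pinv_mul_pinv : pinv hX * X * pinv hX = pinv hX := by
  obtain ⟨u, d, hu, h1, h2, h3⟩ := pack hX
  rw [h2, h1, umul hu, umul hu]
  congr 2
  refine dcongr fun i => ?_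
  rcases eq_or_ne ((d i : ℂ)) 0 with h | h
  · simp [h]
  · field_simp

lemma supp_idem : (X * pinv hX) * (X * pinv hX) = X * pinv hX := by
  calc (X * pinv hX) * (X * pinv hX) = (X * pinv hX * X) * pinv hX := by
        simp only [Matrix.mul_assoc]
      _ = X * pinv hX := by rw [mul_pinv_mul]

lemma supp_hermitian : (X * pinv hX)ᴴ = X * pinv hX := by
  rw [conjTranspose_mul, pinv_hermitian, hX.eq, pinv_comm]

/-- Hermitian idempotents are PSD. -/
lemma posSemidef_of_idem {P : Matrix (Fin n) (Fin n) ℂ} (h1 : Pᴴ = P) (h2 : P * P = P) :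
    P.PosSemidef := by
  have : P = Pᴴ * P := by rw [h1, h2]
  rw [this]
  exact posSemidef_conjTranspose_mul_self P

lemma one_sub_supp_posSemidef : (1 - X * pinv hX).PosSemidef := by
  refine posSemidef_of_idem ?_ ?_
  · rw [conjTranspose_sub, supp_hermitian, conjTranspose_one]
  · have h := supp_idem hX
    set P := X * pinv hX
    calc (1 - P) * (1 - P) = 1 - P - P + P * P := by noncomm_ring
      _ = 1 - P := by rw [h]; noncomm_ring

end pinvprops


lemma dot_inner (x y : Fin n → ℂ) :
    star x ⬝ᵥ y = inner ℂ ((WithLp.equiv 2 (Fin n → ℂ)).symm x) ((WithLp.equiv 2 (Fin n → ℂ)).symm y) := by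
  rw [dotProduct_comm]; rfl

lemma dot_self_re (x : Fin n → ℂ) :
    (star x ⬝ᵥ x).re = ‖(WithLp.equiv 2 (Fin n → ℂ)).symm x‖ ^ 2 := by
  rw [← inner_self_eq_norm_sq (𝕜 := ℂ), ← dot_inner]
  rfl

lemma cs_re (x y : Fin n → ℂ) :
    (star x ⬝ᵥ y).re ≤ Real.sqrt (star x ⬝ᵥ x).re * Real.sqrt (star y ⬝ᵥ y).re := by
  calc (star x ⬝ᵥ y).re ≤ ‖star x ⬝ᵥ y‖ := Complex.re_le_norm _
    _ ≤ ‖(WithLp.equiv 2 (Fin n → ℂ)).symm x‖ * ‖(WithLp.equiv 2 (Fin n → ℂ)).symm y‖ := by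
        rw [dot_inner]; exact norm_inner_le_norm _ _
    _ = Real.sqrt (star x ⬝ᵥ x).re * Real.sqrt (star y ⬝ᵥ y).re := by
        rw [dot_self_re, dot_self_re, Real.sqrt_sq (norm_nonneg _), Real.sqrt_sq (norm_nonneg _)]

lemma move_conjT (M : Matrix (Fin n) (Fin n) ℂ) (x y : Fin n → ℂ) :
    star x ⬝ᵥ (Mᴴ *ᵥ y) = star (M *ᵥ x) ⬝ᵥ y := by
  rw [star_mulVec, dotProduct_mulVec]

lemma star_sum_elim (u v : Fin n → ℂ) :
    star (Sum.elim u v) = Sum.elim (star u) (star v) := by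
  funext i; rcases i with i | i <;> rfl

lemma dot_sum_elim (a b c d : Fin n → ℂ) :
    Sum.elim a b ⬝ᵥ Sum.elim c d = a ⬝ᵥ c + b ⬝ᵥ d := by
  simp [dotProduct, Fintype.sum_sum_type]

lemma dot_nonneg_re (x : Fin n → ℂ) : 0 ≤ (star x ⬝ᵥ x).re := by
  rw [dot_self_re]; positivity

lemma swap_psd {A B C : Matrix (Fin n) (Fin n) ℂ} (hM : (fromBlocks A C Cᴴ B).PosSemidef) :
    (fromBlocks B Cᴴ C A).PosSemidef := by
  have h := hM.mul_mul_conjTranspose_same (fromBlocks 0 1 1 0 : Matrix (Fin n ⊕ Fin n) (Fin n ⊕ Fin n) ℂ)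
  simpa [fromBlocks_conjTranspose, fromBlocks_multiply] using h

lemma ker_block {A B C : Matrix (Fin n) (Fin n) ℂ}
    (hM : (fromBlocks A C Cᴴ B).PosSemidef) {v : Fin n → ℂ} (hv : B *ᵥ v = 0) :
    C *ᵥ v = 0 := by
  by_contra hw
  set w := C *ᵥ v with hwdef
  -- a = ⟨w, A w⟩ ≥ 0
  have ha : 0 ≤ (star w ⬝ᵥ (A *ᵥ w)).re := by
    have h0 := hM.dotProduct_mulVec_nonneg (Sum.elim w 0)
    rw [fromBlocks_mulVec] at h0
    simp only [Sum.elim_comp_inl, Sum.elim_comp_inr] at h0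
    rw [star_sum_elim, dot_sum_elim] at h0
    simpa using (Complex.le_def.mp h0).1
  have hc : 0 < (star w ⬝ᵥ w).re := by
    rcases lt_or_eq_of_le (dot_nonneg_re w) with h | h
    · exact h
    · exfalso; apply hw
      have : (star w ⬝ᵥ w) = 0 := by
        have him : (star w ⬝ᵥ w).im = 0 := by
          have := dot_inner w w
          rw [this]
          simpa using (inner_self_im (𝕜 := ℂ) ((WithLp.equiv 2 (Fin n → ℂ)).symm w))
        apply Complex.ext <;> simp [← h, him]
      exact dotProduct_star_self_eq_zero.mp this
  set ar := (star w ⬝ᵥ (A *ᵥ w)).re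
  set cr := (star w ⬝ᵥ w).re
  set t : ℝ := cr / (ar + 1) with htdef
  have hq := hM.dotProduct_mulVec_nonneg (Sum.elim ((-(t:ℂ)) • w) v)
  rw [fromBlocks_mulVec] at hq
  simp only [Sum.elim_comp_inl, Sum.elim_comp_inr] at hq
  rw [star_sum_elim, dot_sum_elim, hv, add_zero, mulVec_smul, ← hwdef] at hq
  have hexp : star ((-(t:ℂ)) • w) ⬝ᵥ ((-(t:ℂ)) • (A *ᵥ w) + w)
      + star v ⬝ᵥ (Cᴴ *ᵥ ((-(t:ℂ)) • w))
      = (((t^2 : ℝ)) : ℂ) * (star w ⬝ᵥ (A *ᵥ w)) - (((2*t : ℝ)) : ℂ) * (star w ⬝ᵥ w) := by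
    rw [move_conjT, ← hwdef, star_smul, dotProduct_add]
    simp only [smul_dotProduct, dotProduct_smul, star_neg, smul_eq_mul, Complex.star_def,
      Complex.conj_ofReal]
    push_cast
    ring
  rw [hexp] at hq
  have hre := (Complex.le_def.mp hq).1
  simp only [Complex.zero_re, Complex.sub_re, Complex.re_ofReal_mul] at hre
  have htpos : 0 < t := by positivity
  have hle : t * ar ≤ cr := by
    rw [htdef, div_mul_eq_mul_div, div_le_iff₀ (by positivity)]
    nlinarith
  nlinarith


lemma trace_mul_diagonal_re (M : Matrix (Fin n) (Fin n) ℂ) (d : Fin n → ℝ) :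
    ((M * diagonal (fun i => (d i : ℂ))).trace).re = ∑ i, d i * (M i i).re := by
  rw [Matrix.trace, Complex.re_sum]
  congr 1
  funext i
  rw [Matrix.diag, mul_diagonal, mul_comm, Complex.re_ofReal_mul]

lemma entry_eq_dot (M u : Matrix (Fin n) (Fin n) ℂ) (i : Fin n) :
    ((star u * M) * u) i i = star (fun a => u a i) ⬝ᵥ (M *ᵥ fun a => u a i) := by
  simp only [mul_apply, mulVec, dotProduct, star_apply, Pi.star_apply, Finset.sum_mul,
    Finset.mul_sum]
  rw [Finset.sum_comm]
  congr 1; funext b; congr 1; funext a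
  ring

lemma unit_col (u : Matrix (Fin n) (Fin n) ℂ) (hu : star u * u = 1) (i : Fin n) :
    star (fun a => u a i) ⬝ᵥ (fun a => u a i) = 1 := by
  have : ((star u * u) : Matrix (Fin n) (Fin n) ℂ) i i = 1 := by rw [hu]; simp
  rw [← this, mul_apply]
  simp [dotProduct, Matrix.star_apply]

lemma trace_contraction_le {T K : Matrix (Fin n) (Fin n) ℂ} (hT : T.PosSemidef)
    (hK : ∀ v : Fin n → ℂ, (star (K *ᵥ v) ⬝ᵥ (K *ᵥ v)).re ≤ (star v ⬝ᵥ v).re) :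
    ((K * T).trace).re ≤ (T.trace).re := by
  obtain ⟨u, d, hu, h1, -, h3⟩ := pack hT.1
  have hnn : ∀ i, 0 ≤ d i := by intro i; rw [h3]; exact hT.eigenvalues_nonneg i
  have huu : u * star u = 1 := by
    exact mul_eq_one_comm.mpr hu
  have htr : (K * T).trace = ((star u * K * u) * diagonal (fun i => (d i : ℂ))).trace := by
    rw [h1]
    rw [show K * ((u * diagonal fun i => ((d i : ℂ))) * star u)
        = (K * u * diagonal (fun i => (d i : ℂ))) * star u by simp only [Matrix.mul_assoc]]
    rw [Matrix.trace_mul_comm, ← Matrix.mul_assoc, ← Matrix.mul_assoc]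
  have htrT : T.trace = (diagonal (fun i => (d i : ℂ))).trace := by
    rw [h1, Matrix.trace_mul_comm, ← Matrix.mul_assoc, hu, Matrix.one_mul]
  rw [htr, htrT, trace_mul_diagonal_re]
  have htrD : ((diagonal (fun i => (d i : ℂ))).trace).re = ∑ i, d i := by
    rw [Matrix.trace, Complex.re_sum]
    congr 1; funext i; simp
  rw [htrD]
  apply Finset.sum_le_sum
  intro i _
  have hb : (((star u * K) * u) i i).re ≤ 1 := by
    rw [entry_eq_dot]
    set c := fun a => u a i
    calc (star c ⬝ᵥ (K *ᵥ c)).re ≤ Real.sqrt (star c ⬝ᵥ c).re * Real.sqrt (star (K *ᵥ c) ⬝ᵥ (K *ᵥ c)).re :=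
          cs_re _ _
      _ ≤ 1 := by
          have h1 : (star c ⬝ᵥ c) = 1 := unit_col u hu i
          have h2 : (star (K *ᵥ c) ⬝ᵥ (K *ᵥ c)).re ≤ 1 := by
            have := hK c; rw [h1] at this; simpa using this
          rw [h1]
          simp only [Complex.one_re, Real.sqrt_one, one_mul]
          calc Real.sqrt (star (K *ᵥ c) ⬝ᵥ (K *ᵥ c)).re ≤ Real.sqrt 1 :=
                Real.sqrt_le_sqrt h2
            _ = 1 := Real.sqrt_one
  calc d i * ((star u * K * u) i i).re ≤ d i * 1 := by
        exact mul_le_mul_of_nonneg_left hb (hnn i)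
    _ = d i := mul_one _

lemma idem_contraction {Q : Matrix (Fin n) (Fin n) ℂ} (hH : Qᴴ = Q) (hI : Q * Q = Q)
    (v : Fin n → ℂ) : (star v ⬝ᵥ (Q *ᵥ v)).re ≤ (star v ⬝ᵥ v).re := by
  have hps : (1 - Q).PosSemidef := by
    refine posSemidef_of_idem ?_ ?_
    · rw [conjTranspose_sub, hH, conjTranspose_one]
    · calc (1 - Q) * (1 - Q) = 1 - Q - Q + Q * Q := by noncomm_ring
        _ = 1 - Q := by rw [hI]; noncomm_ring
  have h := (Complex.le_def.mp (hps.dotProduct_mulVec_nonneg v)).1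
  rw [sub_mulVec, dotProduct_sub, one_mulVec] at h
  simp only [Complex.zero_re, Complex.sub_re] at h
  linarith

lemma ker_mul {C M D : Matrix (Fin n) (Fin n) ℂ}
    (h : ∀ v, M *ᵥ v = 0 → C *ᵥ v = 0) (hMD : M * D = 0) : C * D = 0 := by
  have hcol : ∀ (X : Matrix (Fin n) (Fin n) ℂ) i j, (X * D) i j = (X *ᵥ fun k => D k j) i := by
    intro X i j
    simp [mul_apply, mulVec, dotProduct]
  ext i j
  rw [hcol]
  have hz : M *ᵥ (fun k => D k j) = 0 := by
    funext i'
    rw [← hcol]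
    rw [hMD]
    rfl
  rw [h _ hz]
  rfl

lemma psqrt_mul_self {X : Matrix (Fin n) (Fin n) ℂ} (hX : X.PosSemidef) :
    hX.sqrt * hX.sqrt = X := by
  have hu : star (hX.1.eigenvectorUnitary : Matrix (Fin n) (Fin n) ℂ) *
      (hX.1.eigenvectorUnitary : Matrix (Fin n) (Fin n) ℂ) = 1 :=
    (Matrix.mem_unitaryGroup_iff').mp hX.1.eigenvectorUnitary.2
  unfold Matrix.PosSemidef.sqrt
  rw [umul hu]
  conv_rhs => rw [hX.1.spectral_theorem, Unitary.conjStarAlgAut_apply]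
  congr 2
  refine dcongr fun i => ?_
  simp only [Function.comp_apply]
  rw [← RCLike.ofReal_mul, Real.mul_self_sqrt (hX.eigenvalues_nonneg i)]

lemma psqrt_posSemidef {X : Matrix (Fin n) (Fin n) ℂ} (hX : X.PosSemidef) :
    hX.sqrt.PosSemidef := by
  unfold Matrix.PosSemidef.sqrt
  rw [star_eq_conjTranspose]
  apply PosSemidef.mul_mul_conjTranspose_same
  refine posSemidef_diagonal_iff.mpr fun i => ?_
  simp only [Function.comp_apply]
  exact RCLike.ofReal_nonneg.mpr (Real.sqrt_nonneg _)

end OTPaux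

open OTPaux

set_option maxHeartbeats 3000000 in
theorem otp_block_trace_max (n : ℕ) (A B : Matrix (Fin n) (Fin n) ℂ)
    (hA : A.PosSemidef) (hB : B.PosSemidef)
    (hS : (hB.sqrt * A * hB.sqrt).PosSemidef) :
    IsGreatest
      {x : ℝ | ∃ C : Matrix (Fin n) (Fin n) ℂ,
        (Matrix.fromBlocks A C Cᴴ B).PosSemidef ∧ (x : ℂ) = C.trace + Cᴴ.trace}
      (2 * (hS.sqrt.trace.re)) := by
  classical
  set Ah := hA.sqrt with hAhdef
  set Bh := hB.sqrt with hBhdef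
  set T := hS.sqrt with hTdef
  have hAh : Ah.PosSemidef := psqrt_posSemidef hA
  have hBh : Bh.PosSemidef := psqrt_posSemidef hB
  have hT : T.PosSemidef := psqrt_posSemidef hS
  set Ap := pinv hAh.1 with hApdef
  set Bp := pinv hBh.1 with hBpdef
  set Tp := pinv hT.1 with hTpdef
  set N := Bh * Ah with hNdef
  set P := T * Tp with hPdef
  have f1 : Ah * Ah = A := psqrt_mul_self hA
  have f2 : Bh * Bh = B := psqrt_mul_self hB
  have f3 : T * T = Bh * A * Bh := psqrt_mul_self hS
  have hNH : Nᴴ = Ah * Bh := by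
    rw [hNdef, conjTranspose_mul, hAh.1.eq, hBh.1.eq]
  have hNN : N * Nᴴ = T * T := by
    rw [hNH, f3, hNdef]
    calc Bh * Ah * (Ah * Bh) = Bh * (Ah * Ah) * Bh := by simp only [Matrix.mul_assoc]
      _ = Bh * A * Bh := by rw [f1]
  have hPT : P * T = T := mul_pinv_mul hT.1
  have hTP : T * P = T := by
    rw [hPdef, pinv_comm hT.1, ← Matrix.mul_assoc]
    exact mul_pinv_mul hT.1
  have hPH : Pᴴ = P := supp_hermitian hT.1
  have hPP : P * P = P := supp_idem hT.1
  have hTpH : Tpᴴ = Tp := pinv_hermitian hT.1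
  have hTpT : Tp * T = P := (pinv_comm hT.1).symm
  have hPN : P * N = N := by
    have hE : (N - P * N) * (N - P * N)ᴴ = 0 := by
      rw [conjTranspose_sub, conjTranspose_mul P N, hPH]
      rw [Matrix.sub_mul, Matrix.mul_sub, Matrix.mul_sub]
      have e1 : N * (Nᴴ * P) = T * T := by
        rw [← Matrix.mul_assoc, hNN, Matrix.mul_assoc, hTP]
      have e2 : P * N * Nᴴ = T * T := by
        rw [Matrix.mul_assoc, hNN, ← Matrix.mul_assoc, hPT]
      have e3 : P * N * (Nᴴ * P) = T * T := by
        calc P * N * (Nᴴ * P) = (P * N * Nᴴ) * P := by rw [← Matrix.mul_assoc (P * N) Nᴴ P]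
          _ = (T * T) * P := by rw [e2]
          _ = T * T := by rw [Matrix.mul_assoc, hTP]
      rw [hNN, e1, e2, e3]
      abel
    have := Matrix.self_mul_conjTranspose_eq_zero.mp hE
    rw [sub_eq_zero] at this
    exact this.symm
  set V := Tp * N with hVdef
  have hTV : T * V = N := by rw [hVdef, ← Matrix.mul_assoc, ← hPdef, hPN]
  have hVH : Vᴴ = Nᴴ * Tp := by rw [hVdef, conjTranspose_mul, hTpH]
  have hVVH : V * Vᴴ = P := by
    rw [hVdef, hVH]
    calc Tp * N * (Nᴴ * Tp) = Tp * (N * Nᴴ) * Tp := by simp only [Matrix.mul_assoc]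
      _ = Tp * (T * T) * Tp := by rw [hNN]
      _ = (Tp * T) * (T * Tp) := by simp only [Matrix.mul_assoc]
      _ = P := by rw [hTpT, ← hPdef, hPP]
  constructor
  · -- membership
    set C₀ := Ah * Vᴴ * Bh with hC₀def
    refine ⟨C₀, ?_, ?_⟩
    · set K := fromBlocks Ah (Vᴴ * Bh) 0 ((1 - P) * Bh) with hKdef
      have e12 : (Vᴴ * Bh)ᴴ = Bh * V := by
        rw [conjTranspose_mul Vᴴ Bh, hBh.1.eq, conjTranspose_conjTranspose]
      have e22 : ((1 - P) * Bh)ᴴ = Bh * (1 - P) := by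
        rw [conjTranspose_mul (1 - P) Bh, hBh.1.eq, conjTranspose_sub, hPH, conjTranspose_one]
      have hKH : Kᴴ = fromBlocks Ah 0 (Bh * V) (Bh * (1 - P)) := by
        rw [hKdef, fromBlocks_conjTranspose, hAh.1.eq, conjTranspose_zero, e12, e22]
      have g11 : Ah * Ah + (0 : Matrix (Fin n) (Fin n) ℂ) * (0 : Matrix (Fin n) (Fin n) ℂ) = A := by
        rw [f1, Matrix.mul_zero, add_zero]
      have g12 : Ah * (Vᴴ * Bh) + (0 : Matrix (Fin n) (Fin n) ℂ) * ((1 - P) * Bh) = C₀ := by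
        rw [Matrix.zero_mul, add_zero, hC₀def, Matrix.mul_assoc]
      have g21 : (Bh * V) * Ah + (Bh * (1 - P)) * (0 : Matrix (Fin n) (Fin n) ℂ) = C₀ᴴ := by
        rw [Matrix.mul_zero, add_zero, hC₀def, conjTranspose_mul (Ah * Vᴴ) Bh,
          conjTranspose_mul Ah Vᴴ, hBh.1.eq, hAh.1.eq, conjTranspose_conjTranspose,
          Matrix.mul_assoc]
      have g22 : (Bh * V) * (Vᴴ * Bh) + (Bh * (1 - P)) * ((1 - P) * Bh) = B := by
        have h22a : Bh * V * (Vᴴ * Bh) = Bh * P * Bh := by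
          calc Bh * V * (Vᴴ * Bh) = Bh * (V * Vᴴ) * Bh := by simp only [Matrix.mul_assoc]
            _ = Bh * P * Bh := by rw [hVVH]
        have h22b : Bh * (1 - P) * ((1 - P) * Bh) = Bh * (1 - P) * Bh := by
          have hid : (1 - P) * (1 - P) = 1 - P := by
            calc (1 - P) * (1 - P) = 1 - P - P + P * P := by noncomm_ring
              _ = 1 - P := by rw [hPP]; noncomm_ring
          calc Bh * (1 - P) * ((1 - P) * Bh) = Bh * ((1 - P) * (1 - P)) * Bh := by
                simp only [Matrix.mul_assoc]
            _ = Bh * (1 - P) * Bh := by rw [hid]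
        rw [h22a, h22b]
        calc Bh * P * Bh + Bh * (1 - P) * Bh = Bh * (P + (1 - P)) * Bh := by
              rw [Matrix.mul_add, Matrix.add_mul]
          _ = B := by rw [add_sub_cancel, Matrix.mul_one, f2]
      have hKK : Kᴴ * K = fromBlocks A C₀ C₀ᴴ B := by
        rw [hKH, hKdef, fromBlocks_multiply, g11, g12, g21, g22]
      rw [← hKK]
      exact posSemidef_conjTranspose_mul_self K
    · have htrC : C₀.trace = T.trace := by
        rw [hC₀def, Matrix.trace_mul_comm, ← Matrix.mul_assoc]
        have : Bh * Ah * Vᴴ = T := by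
          rw [← hNdef, hVH, ← Matrix.mul_assoc, hNN, Matrix.mul_assoc, ← hPdef, hTP]
        rw [this]
      have hTreal : T.trace = ((T.trace.re : ℝ) : ℂ) := by
        have h1 : Tᴴ.trace = star T.trace := Matrix.trace_conjTranspose T
        rw [hT.1.eq] at h1
        exact ((Complex.conj_eq_iff_re).mp h1.symm).symm
      have htrCH : C₀ᴴ.trace = T.trace := by
        rw [Matrix.trace_conjTranspose, htrC, hTreal]
        simp
      rw [htrC, htrCH]
      conv_rhs => rw [hTreal]
      push_cast
      ring
  · -- upper bound
    rintro x ⟨C, hM, hx⟩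
    set PA := Ah * Ap with hPAdef
    set PB := Bh * Bp with hPBdef
    have hPAH : PAᴴ = PA := supp_hermitian hAh.1
    have hPBH : PBᴴ = PB := supp_hermitian hBh.1
    have hPAidem : PA * PA = PA := supp_idem hAh.1
    have hPBidem : PB * PB = PB := supp_idem hBh.1
    have hApH : Apᴴ = Ap := pinv_hermitian hAh.1
    have hBpH : Bpᴴ = Bp := pinv_hermitian hBh.1
    have hB0 : B * (1 - PB) = 0 := by
      have hBPB : B * PB = B := by
        rw [hPBdef, ← f2]
        calc Bh * Bh * (Bh * Bp) = Bh * Bh * (Bp * Bh) := by rw [pinv_comm hBh.1]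
          _ = Bh * (Bh * Bp * Bh) := by simp only [Matrix.mul_assoc]
          _ = Bh * Bh := by rw [mul_pinv_mul hBh.1]
      rw [Matrix.mul_sub, Matrix.mul_one, hBPB, sub_self]
    have hA0 : A * (1 - PA) = 0 := by
      have hAPA : A * PA = A := by
        rw [hPAdef, ← f1]
        calc Ah * Ah * (Ah * Ap) = Ah * Ah * (Ap * Ah) := by rw [pinv_comm hAh.1]
          _ = Ah * (Ah * Ap * Ah) := by simp only [Matrix.mul_assoc]
          _ = Ah * Ah := by rw [mul_pinv_mul hAh.1]
      rw [Matrix.mul_sub, Matrix.mul_one, hAPA, sub_self]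
    have hCPB : C * PB = C := by
      have h0 : C * (1 - PB) = 0 := ker_mul (fun v hv => ker_block hM hv) hB0
      rw [Matrix.mul_sub, Matrix.mul_one] at h0
      exact (sub_eq_zero.mp h0).symm
    have hM2 : (fromBlocks B Cᴴ (Cᴴ)ᴴ A).PosSemidef := by
      rw [conjTranspose_conjTranspose]; exact swap_psd hM
    have hCHPA : Cᴴ * PA = Cᴴ := by
      have h0 : Cᴴ * (1 - PA) = 0 := ker_mul (fun v hv => ker_block hM2 hv) hA0
      rw [Matrix.mul_sub, Matrix.mul_one] at h0
      exact (sub_eq_zero.mp h0).symm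
    have hPAC : PA * C = C := by
      have h := congrArg conjTranspose hCHPA
      rw [conjTranspose_mul Cᴴ PA, hPAH, conjTranspose_conjTranspose] at h
      exact h
    obtain ⟨W, hWdef⟩ : ∃ W, W = Ap * C * Bp := ⟨_, rfl⟩
    have hWH : Wᴴ = Bp * Cᴴ * Ap := by
      rw [hWdef, conjTranspose_mul (Ap * C) Bp, conjTranspose_mul Ap C, hApH, hBpH,
        Matrix.mul_assoc]
    have hAWB : Ah * W * Bh = C := by
      calc Ah * W * Bh = (Ah * Ap) * (C * (Bp * Bh)) := by
            rw [hWdef]; simp only [Matrix.mul_assoc]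
        _ = PA * (C * PB) := by rw [← pinv_comm hBh.1, ← hPBdef, ← hPAdef]
        _ = C := by rw [hCPB, hPAC]
    have hPAAp : PA * Ap = Ap := by
      rw [hPAdef, pinv_comm hAh.1]
      exact pinv_mul_pinv hAh.1
    have hPAW : PA * W = W := by
      calc PA * W = (PA * Ap) * C * Bp := by rw [hWdef]; simp only [Matrix.mul_assoc]
        _ = W := by rw [hPAAp, hWdef, Matrix.mul_assoc]
    have hApAAp : Ap * A * Ap = PA := by
      rw [← f1]
      calc Ap * (Ah * Ah) * Ap = (Ap * Ah) * (Ah * Ap) := by simp only [Matrix.mul_assoc]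
        _ = PA * PA := by rw [← pinv_comm hAh.1, ← hPAdef]
        _ = PA := hPAidem
    have hBpBBp : Bp * B * Bp = PB := by
      rw [← f2]
      calc Bp * (Bh * Bh) * Bp = (Bp * Bh) * (Bh * Bp) := by simp only [Matrix.mul_assoc]
        _ = PB * PB := by rw [← pinv_comm hBh.1, ← hPBdef]
        _ = PB := hPBidem
    -- W is a contraction
    have cW : ∀ v : Fin n → ℂ, (star (W *ᵥ v) ⬝ᵥ (W *ᵥ v)).re ≤ (star v ⬝ᵥ v).re := by
      intro v
      obtain ⟨z, hzdef⟩ : ∃ z, z = W *ᵥ v := ⟨_, rfl⟩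
      have m1 : ∀ y, star (Ap *ᵥ z) ⬝ᵥ y = star z ⬝ᵥ (Ap *ᵥ y) := by
        intro y
        conv_rhs => rw [← hApH]
        exact (move_conjT Ap z y).symm
      have m2 : ∀ y, star (Bp *ᵥ v) ⬝ᵥ y = star v ⬝ᵥ (Bp *ᵥ y) := by
        intro y
        conv_rhs => rw [← hBpH]
        exact (move_conjT Bp v y).symm
      have hPAz : PA *ᵥ z = z := by rw [hzdef, mulVec_mulVec, hPAW]
      have t1 : star (Ap *ᵥ z) ⬝ᵥ (A *ᵥ (Ap *ᵥ z)) = star z ⬝ᵥ z := by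
        rw [m1, mulVec_mulVec, mulVec_mulVec, hApAAp, hPAz]
      have t2 : star (Ap *ᵥ z) ⬝ᵥ (C *ᵥ (Bp *ᵥ v)) = star z ⬝ᵥ z := by
        rw [m1, mulVec_mulVec, mulVec_mulVec, ← hWdef, ← hzdef]
      have t3 : star (Bp *ᵥ v) ⬝ᵥ (Cᴴ *ᵥ (Ap *ᵥ z)) = star z ⬝ᵥ z := by
        rw [m2, mulVec_mulVec, mulVec_mulVec, ← hWH, move_conjT W v z, ← hzdef]
      have t4 : star (Bp *ᵥ v) ⬝ᵥ (B *ᵥ (Bp *ᵥ v)) = star v ⬝ᵥ (PB *ᵥ v) := by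
        rw [m2, mulVec_mulVec, mulVec_mulVec, hBpBBp]
      have hq := hM.dotProduct_mulVec_nonneg (Sum.elim (-(Ap *ᵥ z)) (Bp *ᵥ v))
      rw [fromBlocks_mulVec] at hq
      simp only [Sum.elim_comp_inl, Sum.elim_comp_inr] at hq
      rw [star_sum_elim, dot_sum_elim] at hq
      simp only [star_neg, mulVec_neg, dotProduct_add, neg_dotProduct, dotProduct_neg,
        neg_neg] at hq
      rw [t1, t2, t3, t4] at hq
      have hre := (Complex.le_def.mp hq).1
      simp only [Complex.add_re, Complex.neg_re, Complex.zero_re] at hre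
      have hPBle := idem_contraction hPBH hPBidem v
      rw [← hzdef]
      linarith
    -- V is a contraction
    obtain ⟨Q, hQdef⟩ : ∃ Q, Q = Vᴴ * V := ⟨_, rfl⟩
    have hQH : Qᴴ = Q := by
      rw [hQdef, conjTranspose_mul Vᴴ V, conjTranspose_conjTranspose]
    have hPTp : P * Tp = Tp := by
      rw [hPdef, pinv_comm hT.1]
      exact pinv_mul_pinv hT.1
    have hPV : P * V = V := by
      calc P * V = (P * Tp) * N := by rw [hVdef, ← Matrix.mul_assoc]
        _ = V := by rw [hPTp, hVdef]
    have hQQ : Q * Q = Q := by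
      rw [hQdef, Matrix.mul_assoc Vᴴ V (Vᴴ * V), ← Matrix.mul_assoc V Vᴴ V, hVVH, hPV]
    have cV : ∀ y : Fin n → ℂ, (star (V *ᵥ y) ⬝ᵥ (V *ᵥ y)).re ≤ (star y ⬝ᵥ y).re := by
      intro y
      have h1 : star (V *ᵥ y) ⬝ᵥ (V *ᵥ y) = star y ⬝ᵥ (Q *ᵥ y) := by
        rw [← move_conjT V y (V *ᵥ y), mulVec_mulVec, ← hQdef]
      rw [h1]
      exact idem_contraction hQH hQQ y
    have cK : ∀ y : Fin n → ℂ,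
        (star ((V * W) *ᵥ y) ⬝ᵥ ((V * W) *ᵥ y)).re ≤ (star y ⬝ᵥ y).re := by
      intro y
      rw [← mulVec_mulVec]
      exact le_trans (cV (W *ᵥ y)) (cW y)
    have htrC : C.trace = ((V * W) * T).trace := by
      have lhs1 : C.trace = (N * W).trace := by
        calc C.trace = (Ah * W * Bh).trace := by rw [hAWB]
          _ = (Bh * (Ah * W)).trace := Matrix.trace_mul_comm _ _
          _ = (N * W).trace := by rw [← Matrix.mul_assoc, ← hNdef]
      have rhs1 : ((V * W) * T).trace = (N * W).trace := by
        rw [Matrix.trace_mul_comm, ← Matrix.mul_assoc, hTV]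
      rw [lhs1, rhs1]
    have hbound := trace_contraction_le hT cK
    have hxval : x = 2 * C.trace.re := by
      have hxc : (x : ℂ) = ((2 * C.trace.re : ℝ) : ℂ) := by
        rw [hx, Matrix.trace_conjTranspose, ← Complex.add_conj]
        rfl
      exact_mod_cast hxc
    rw [hxval]
    have hfin : C.trace.re ≤ T.trace.re := by rw [htrC]; exact hbound
    linarith
end

section
/- For positive definite Hermitian matrices A, B and positive definite Hermitian weight Ω, the weighted Hellinger quantity tr(ΩA) + tr(ΩB) - 2·tr((B^{1/2} Ω A Ω B^{1/2})^{1/2}) is nonnegative. -/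
open Matrix
open scoped ComplexOrder

lemma Matrix.PosSemidef.sqrt_mul_self {n : Type*} [Fintype n] [DecidableEq n] {𝕜 : Type*}
    [RCLike 𝕜] {A : Matrix n n 𝕜} (hA : A.PosSemidef) : hA.sqrt * hA.sqrt = A := by
  have hU : (star hA.1.eigenvectorUnitary : Matrix n n 𝕜) * hA.1.eigenvectorUnitary.1 = 1 :=
    Unitary.coe_star_mul_self _
  have hD : diagonal ((↑) ∘ (√·) ∘ hA.1.eigenvalues) * diagonal ((↑) ∘ (√·) ∘ hA.1.eigenvalues)
      = diagonal (RCLike.ofReal ∘ hA.1.eigenvalues : n → 𝕜) := by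
    rw [diagonal_mul_diagonal]
    congr 1
    funext i
    simp only [Function.comp_apply]
    rw [← RCLike.ofReal_mul, Real.mul_self_sqrt (hA.eigenvalues_nonneg i)]
  conv_rhs => rw [hA.1.spectral_theorem, Unitary.conjStarAlgAut_apply]
  unfold Matrix.PosSemidef.sqrt
  calc _ = hA.1.eigenvectorUnitary.1 * diagonal ((↑) ∘ (√·) ∘ hA.1.eigenvalues) *
        ((star hA.1.eigenvectorUnitary : Matrix n n 𝕜) * hA.1.eigenvectorUnitary.1) *
        diagonal ((↑) ∘ (√·) ∘ hA.1.eigenvalues) * (star hA.1.eigenvectorUnitary : Matrix n n 𝕜) := by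
        simp only [Matrix.mul_assoc]
    _ = _ := by rw [hU, Matrix.mul_one, Matrix.mul_assoc _ (diagonal _) (diagonal _), hD]

lemma Matrix.PosSemidef.posSemidef_sqrt {n : Type*} [Fintype n] [DecidableEq n] {𝕜 : Type*}
    [RCLike 𝕜] {A : Matrix n n 𝕜} (hA : A.PosSemidef) : hA.sqrt.PosSemidef := by
  have h := (Matrix.PosSemidef.diagonal (d := ((↑) ∘ (√·) ∘ hA.1.eigenvalues : n → 𝕜))
    (fun i => by simp [Real.sqrt_nonneg])).mul_mul_conjTranspose_same hA.1.eigenvectorUnitary.1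
  unfold Matrix.PosSemidef.sqrt
  rwa [star_eq_conjTranspose]

lemma trace_re_conjTranspose_mul_self_nonneg {n : ℕ} (P : Matrix (Fin n) (Fin n) ℂ) :
    0 ≤ (Pᴴ * P).trace.re := by
  rw [Matrix.trace]
  simp only [Matrix.diag, Matrix.mul_apply, Matrix.conjTranspose_apply]
  rw [Complex.re_sum]
  refine Finset.sum_nonneg fun j _ => ?_
  rw [Complex.re_sum]
  refine Finset.sum_nonneg fun i _ => ?_
  have : (starRingEnd ℂ) (P i j) * P i j = (Complex.normSq (P i j) : ℂ) := by
    rw [mul_comm, Complex.mul_conj]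
  simp [this, Complex.normSq_nonneg]

lemma two_trace_re_le {n : ℕ} (M N : Matrix (Fin n) (Fin n) ℂ) :
    2 * (Mᴴ * N).trace.re ≤ (Mᴴ * M).trace.re + (Nᴴ * N).trace.re := by
  have h := trace_re_conjTranspose_mul_self_nonneg (M - N)
  have hexp : (M - N)ᴴ * (M - N) = Mᴴ * M - Mᴴ * N - Nᴴ * M + Nᴴ * N := by
    rw [Matrix.conjTranspose_sub]
    noncomm_ring
  have hNM : (Nᴴ * M).trace.re = (Mᴴ * N).trace.re := by
    have : Nᴴ * M = (Mᴴ * N)ᴴ := by simp [Matrix.conjTranspose_mul]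
    rw [this, Matrix.trace_conjTranspose]
    simp
  rw [hexp] at h
  simp only [Matrix.trace_add, Matrix.trace_sub, Complex.add_re, Complex.sub_re] at h
  linarith

lemma hellinger_key {n : ℕ} (A B Ω a b o : Matrix (Fin n) (Fin n) ℂ)
    (haH : aᴴ = a) (hbH : bᴴ = b) (hoH : oᴴ = o) (hΩH : Ωᴴ = Ω)
    (haa : a * a = A) (hbb : b * b = B) (hoo : o * o = Ω)
    (hdA : IsUnit A.det) (hdB : IsUnit B.det) (hdΩ : IsUnit Ω.det)
    (hS : (b * Ω * A * Ω * b).PosSemidef) :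
    0 ≤ (Ω * A).trace.re + (Ω * B).trace.re - 2 * hS.sqrt.trace.re := by
  have hdb : IsUnit b.det := by
    refine isUnit_of_mul_isUnit_left (y := b.det) ?_
    rw [← Matrix.det_mul, hbb]; exact hdB
  have hR2 : hS.sqrt * hS.sqrt = b * Ω * A * Ω * b := hS.sqrt_mul_self
  have hRH : (hS.sqrt)ᴴ = hS.sqrt := hS.posSemidef_sqrt.1
  set R := hS.sqrt with hRdef
  have hdR : IsUnit R.det := by
    refine isUnit_of_mul_isUnit_left (y := R.det) ?_
    rw [← Matrix.det_mul, hR2]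
    simp only [Matrix.det_mul]
    exact ((((hdb.mul hdΩ).mul hdA).mul hdΩ).mul hdb)
  set W := a * Ω * b with hWdef
  have hWH : Wᴴ = b * Ω * a := by
    simp [hWdef, Matrix.conjTranspose_mul, haH, hbH, hΩH, Matrix.mul_assoc]
  have hWW : Wᴴ * W = b * Ω * A * Ω * b := by
    rw [hWH, hWdef, ← haa]
    noncomm_ring
  set U := W * R⁻¹ with hUdef
  have hUH : Uᴴ = R⁻¹ * Wᴴ := by
    rw [hUdef, Matrix.conjTranspose_mul, Matrix.conjTranspose_nonsing_inv, hRH]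
  have hR : Uᴴ * W = R := by
    rw [hUH, Matrix.mul_assoc, hWW, ← hR2, ← Matrix.mul_assoc,
      Matrix.nonsing_inv_mul _ hdR, Matrix.one_mul]
  have hUU : Uᴴ * U = 1 := by
    rw [hUdef, ← Matrix.mul_assoc, hR, Matrix.mul_nonsing_inv _ hdR]
  have hUUc : U * Uᴴ = 1 := mul_eq_one_comm.mp hUU
  set Y := o * a with hYdef
  set Z := o * b with hZdef
  set M := Y * U with hMdef
  have hMH : Mᴴ = Uᴴ * (a * o) := by
    simp [hMdef, hYdef, Matrix.conjTranspose_mul, haH, hoH]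
  have h1 : Mᴴ * Z = R := by
    rw [hMH, hZdef, ← hR, hWdef, ← hoo]
    noncomm_ring
  have hYY : (Yᴴ * Y).trace = (Ω * A).trace := by
    have : Yᴴ * Y = a * Ω * a := by
      simp [hYdef, Matrix.conjTranspose_mul, haH, hoH, ← hoo, Matrix.mul_assoc]
    rw [this, Matrix.mul_assoc, Matrix.trace_mul_comm, Matrix.mul_assoc, haa]
  have hZZ : (Zᴴ * Z).trace = (Ω * B).trace := by
    have : Zᴴ * Z = b * Ω * b := by
      simp [hZdef, Matrix.conjTranspose_mul, hbH, hoH, ← hoo, Matrix.mul_assoc]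
    rw [this, Matrix.mul_assoc, Matrix.trace_mul_comm, Matrix.mul_assoc, hbb]
  have hMM : (Mᴴ * M).trace = (Ω * A).trace := by
    have e1 : Mᴴ * M = Uᴴ * (Yᴴ * Y * U) := by
      rw [hMdef, Matrix.conjTranspose_mul]
      noncomm_ring
    rw [e1, Matrix.trace_mul_comm, Matrix.mul_assoc, hUUc, Matrix.mul_one, hYY]
  have key := two_trace_re_le M Z
  rw [h1, hMM, hZZ] at key
  linarith

theorem weighted_hellinger_nonneg (n : ℕ)
    (A B Ω : Matrix (Fin n) (Fin n) ℂ)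
    (hA : A.PosDef) (hB : B.PosDef) (hΩ : Ω.PosDef)
    (hS : (hB.posSemidef.sqrt * Ω * A * Ω * hB.posSemidef.sqrt).PosSemidef) :
    0 ≤ (Ω * A).trace.re + (Ω * B).trace.re - 2 * hS.sqrt.trace.re := by
  exact hellinger_key A B Ω hA.posSemidef.sqrt hB.posSemidef.sqrt hΩ.posSemidef.sqrt
    hA.posSemidef.posSemidef_sqrt.1 hB.posSemidef.posSemidef_sqrt.1
    hΩ.posSemidef.posSemidef_sqrt.1 hΩ.1
    hA.posSemidef.sqrt_mul_self hB.posSemidef.sqrt_mul_self hΩ.posSemidef.sqrt_mul_self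
    ((Matrix.isUnit_iff_isUnit_det _).mp hA.isUnit)
    ((Matrix.isUnit_iff_isUnit_det _).mp hB.isUnit)
    ((Matrix.isUnit_iff_isUnit_det _).mp hΩ.isUnit)
    hS
end

section
/- Let A, B be n×n positive definite Hermitian matrices and C an n×n complex matrix with A - C B^{-1} C* positive semidefinite. Then for any positive definite Hermitian Ω, Re tr(Ω C) ≤ tr((B^{1/2} Ω A Ω B^{1/2})^{1/2}). -/
open Matrix
open scoped ComplexOrder

lemma my_diag_nonneg {n : ℕ} {P : Matrix (Fin n) (Fin n) ℂ} (hP : P.PosSemidef) (i : Fin n) :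
    0 ≤ P i i := hP.diag_nonneg

lemma my_trace_nonneg {n : ℕ} {P : Matrix (Fin n) (Fin n) ℂ} (hP : P.PosSemidef) :
    0 ≤ P.trace := by
  rw [Matrix.trace]
  exact Finset.sum_nonneg fun i _ => my_diag_nonneg hP i

lemma my_trace_mul_nonneg {n : ℕ} {P Q : Matrix (Fin n) (Fin n) ℂ}
    (hP : P.PosSemidef) (hQ : Q.PosSemidef) : 0 ≤ (P * Q).trace := by
  have h := hQ.mul_mul_conjTranspose_same hP.sqrt
  rw [hP.posSemidef_sqrt.1] at h
  have e : (P * Q).trace = (hP.sqrt * Q * hP.sqrt).trace := by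
    rw [trace_mul_cycle, hP.sqrt_mul_self]
  rw [e]
  exact my_trace_nonneg h

lemma my_posDef_of_det {n : ℕ} {P : Matrix (Fin n) (Fin n) ℂ}
    (hP : P.PosSemidef) (hdet : P.det ≠ 0) : P.PosDef := by
  refine PosDef.of_dotProduct_mulVec_pos hP.1 fun x hx => ?_
  set V := hP.sqrt with hV
  have hVV : V * V = P := hP.sqrt_mul_self
  have hVH : Vᴴ = V := hP.posSemidef_sqrt.1
  have hVdet : V.det ≠ 0 := fun h => hdet (by rw [← hVV, det_mul, h, mul_zero])
  have hVx : V *ᵥ x ≠ 0 := by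
    intro h
    apply hx
    have := congrArg (fun y => V⁻¹ *ᵥ y) h
    simpa [Matrix.mulVec_mulVec, Matrix.nonsing_inv_mul V (isUnit_iff_ne_zero.mpr hVdet)]
      using this
  have e : star x ⬝ᵥ P *ᵥ x = star (V *ᵥ x) ⬝ᵥ (V *ᵥ x) := by
    rw [← hVV, ← Matrix.mulVec_mulVec, dotProduct_mulVec, star_mulVec, hVH]
  rw [e]
  exact dotProduct_star_self_pos_iff.mpr hVx

set_option maxHeartbeats 1600000 in
theorem weighted_cross_trace_bound (n : ℕ)
    (A B C Ω : Matrix (Fin n) (Fin n) ℂ)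
    (hA : A.PosDef) (hB : B.PosDef) (hΩ : Ω.PosDef)
    (hSchur : (A - C * B⁻¹ * Cᴴ).PosSemidef)
    (hS : (hB.posSemidef.sqrt * Ω * A * Ω * hB.posSemidef.sqrt).PosSemidef) :
    (Ω * C).trace.re ≤ hS.sqrt.trace.re := by
  set W := hB.posSemidef.sqrt with hWdef
  have hW0 : W * W = B := hB.posSemidef.sqrt_mul_self
  have hWH : Wᴴ = W := hB.posSemidef.posSemidef_sqrt.1
  have hWdet : W.det ≠ 0 := fun h => hB.det_pos.ne' (by rw [← hW0, det_mul, h, zero_mul])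
  have hWu : IsUnit W.det := isUnit_iff_ne_zero.mpr hWdet
  have hWiW : W⁻¹ * W = 1 := nonsing_inv_mul W hWu
  have hWWi : W * W⁻¹ = 1 := mul_nonsing_inv W hWu
  have hWiH : (W⁻¹)ᴴ = W⁻¹ := by rw [conjTranspose_nonsing_inv, hWH]
  have hBinv : B⁻¹ = W⁻¹ * W⁻¹ := by rw [← hW0, Matrix.mul_inv_rev]
  set M := W * Ω * A * Ω * W with hMdef
  set S := hS.sqrt with hSdef
  have hSH : Sᴴ = S := hS.posSemidef_sqrt.1
  have hSS : S * S = M := hS.sqrt_mul_self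
  have hMdet : M.det ≠ 0 := by
    rw [hMdef, det_mul, det_mul, det_mul, det_mul]
    exact mul_ne_zero (mul_ne_zero (mul_ne_zero (mul_ne_zero hWdet hΩ.det_pos.ne')
      hA.det_pos.ne') hΩ.det_pos.ne') hWdet
  have hSdet : S.det ≠ 0 := fun h => hMdet (by rw [← hSS, det_mul, h, zero_mul])
  have hSpd : S.PosDef := my_posDef_of_det hS.posSemidef_sqrt hSdet
  have hSu : IsUnit S.det := isUnit_iff_ne_zero.mpr hSdet
  have hSiS : S⁻¹ * S = 1 := nonsing_inv_mul S hSu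
  have hSSi : S * S⁻¹ = 1 := mul_nonsing_inv S hSu
  set Y := W * Ω * C * W⁻¹ with hYdef
  have hYH : Yᴴ = W⁻¹ * Cᴴ * Ω * W := by
    rw [hYdef, conjTranspose_mul, conjTranspose_mul, conjTranspose_mul, hWH, hWiH,
      hΩ.isHermitian.eq]
    noncomm_ring
  have h1 : M - Y * Yᴴ = (W * Ω) * (A - C * B⁻¹ * Cᴴ) * (W * Ω)ᴴ := by
    rw [hYH, hBinv, conjTranspose_mul, hWH, hΩ.isHermitian.eq, hMdef, hYdef]
    noncomm_ring
  have h2 : (M - Y * Yᴴ).PosSemidef := by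
    rw [h1]; exact hSchur.mul_mul_conjTranspose_same (W * Ω)
  have e1 : S⁻¹ * ((Y - S) * (Y - S)ᴴ)
      = S⁻¹ * (Y * Yᴴ) - S⁻¹ * (Y * S) - Yᴴ + S := by
    rw [conjTranspose_sub, hSH]
    calc S⁻¹ * ((Y - S) * (Yᴴ - S))
        = S⁻¹ * (Y * Yᴴ) - S⁻¹ * (Y * S) - (S⁻¹ * S) * Yᴴ + (S⁻¹ * S) * S := by noncomm_ring
      _ = _ := by rw [hSiS, Matrix.one_mul, Matrix.one_mul]
  have e2 : S⁻¹ * (M - Y * Yᴴ) = S - S⁻¹ * (Y * Yᴴ) := by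
    rw [← hSS]
    calc S⁻¹ * (S * S - Y * Yᴴ) = (S⁻¹ * S) * S - S⁻¹ * (Y * Yᴴ) := by noncomm_ring
      _ = _ := by rw [hSiS, Matrix.one_mul]
  have t1 : 0 ≤ (S⁻¹ * ((Y - S) * (Y - S)ᴴ)).trace :=
    my_trace_mul_nonneg hSpd.inv.posSemidef (posSemidef_self_mul_conjTranspose _)
  have t2 : 0 ≤ (S⁻¹ * (M - Y * Yᴴ)).trace :=
    my_trace_mul_nonneg hSpd.inv.posSemidef h2
  have hcyc : (S⁻¹ * (Y * S)).trace = Y.trace := by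
    rw [Matrix.trace_mul_comm, Matrix.mul_assoc, hSSi, Matrix.mul_one]
  have hYHtr : Yᴴ.trace = star Y.trace := trace_conjTranspose Y
  have hYtr : Y.trace = (Ω * C).trace := by
    rw [hYdef, Matrix.trace_mul_comm]
    rw [show W⁻¹ * (W * Ω * C) = (W⁻¹ * W) * (Ω * C) from by noncomm_ring, hWiW,
      Matrix.one_mul]
  rw [e1] at t1
  rw [e2] at t2
  have r1 := (Complex.le_def.mp t1).1
  have r2 := (Complex.le_def.mp t2).1
  simp only [trace_sub, trace_add, hcyc, hYHtr, hYtr, Complex.sub_re, Complex.add_re,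
    Complex.zero_re, Complex.star_def, Complex.conj_re] at r1 r2
  linarith
end
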